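/- arXiv:1201.3288 — 2 statements merged into one kernel-verified Lean document; each statement's English description precedes it below -/
import Mathlib

section
/- With notation as above, for each 1 ≤ j ≤ m−1 the number k_j* := min{k : c_k ≠ 0, m ∤ kj} equals β_{r(j)}, where r(j) = min{l : m ∤ jβ_l}. -/
/-- k_j* = min {k : c_k ≠ 0, m ∤ kj} equals β_{r(j)}. -/
theorem kstar_eq_beta_r (m M j r kstar : ℕ) (c : ℕ → ℂ) (β e : ℕ → ℕ)
    (hm : 1 ≤ m) (hc : ∀ k < m, c k = 0) (he0 : e 0 = m)
    (hβ : ∀ l, 1 ≤ l → l ≤ M → IsLeast {k | c k ≠ 0 ∧ ¬ e (l - 1) ∣ k} (β l))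
    (he : ∀ l, 1 ≤ l → l ≤ M → e l = Nat.gcd (e (l - 1)) (β l))
    (heM : e M = 1)
    (hj : 1 ≤ j) (hjm : j ≤ m - 1)
    (hr : IsLeast {l | 1 ≤ l ∧ l ≤ M ∧ ¬ m ∣ j * β l} r)
    (hk : IsLeast {k | c k ≠ 0 ∧ ¬ m ∣ k * j} kstar) :
    kstar = β r := by
  obtain ⟨⟨hr1, hrM, hrnd⟩, hrmin⟩ := hr
  obtain ⟨⟨hkc, hknd⟩, hkmin⟩ := hk
  -- key: m ∣ j * e l for all l ≤ r - 1
  have key : ∀ l, l ≤ r - 1 → m ∣ j * e l := by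
    intro l hl
    induction l with
    | zero => rw [he0]; exact ⟨j, mul_comm j m⟩
    | succ n ih =>
      have hn : n ≤ r - 1 := Nat.le_of_succ_le hl
      have hnm : n + 1 ≤ M := le_trans hl (le_trans (Nat.sub_le r 1) hrM)
      have hdvd : m ∣ j * β (n + 1) := by
        by_contra hcon
        have := hrmin ⟨Nat.succ_le_succ (Nat.zero_le n), hnm, hcon⟩
        omega
      rw [he (n + 1) (Nat.succ_le_succ (Nat.zero_le n)) hnm]
      simp only [Nat.add_sub_cancel]
      rw [← Nat.gcd_mul_left]
      exact Nat.dvd_gcd (ih hn) hdvd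
  have hkey : m ∣ j * e (r - 1) := key (r - 1) le_rfl
  obtain ⟨⟨hβc, hβnd⟩, hβmin⟩ := hβ r hr1 hrM
  apply le_antisymm
  · exact hkmin ⟨hβc, by rwa [mul_comm]⟩
  · apply hβmin
    refine ⟨hkc, fun hd => hknd ?_⟩
    obtain ⟨t, ht⟩ := hd
    obtain ⟨s, hs⟩ := hkey
    rw [ht, mul_comm, ← mul_assoc, hs]
    exact ⟨s * t, by ring⟩
end

section
/- The order of vanishing at t = 0 of Π*(P'_w) = Π_{j=1}^{m−1} (g(t) − g(ρ^j t)) equals Σ_{l=1}^{M} (e_{l−1} − e_l)·β_l. -/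
open PowerSeries

/-- ord_0 of ∏_{j=1}^{m-1} (g(t) - g(ρ^j t)) equals Σ_{l=1}^{M} (e_{l-1} - e_l) β_l. -/
theorem order_pullback_Pw (m M : ℕ) (c : ℕ → ℂ) (β e : ℕ → ℕ) (ρ : ℂ)
    (hm : 1 ≤ m) (hρ : IsPrimitiveRoot ρ m) (hc : ∀ k < m, c k = 0)
    (he0 : e 0 = m)
    (hβ : ∀ l, 1 ≤ l → l ≤ M → IsLeast {k | c k ≠ 0 ∧ ¬ e (l - 1) ∣ k} (β l))
    (he : ∀ l, 1 ≤ l → l ≤ M → e l = Nat.gcd (e (l - 1)) (β l))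
    (heM : e M = 1) :
    (∏ j ∈ Finset.Icc 1 (m - 1),
        (PowerSeries.mk c - PowerSeries.mk (fun k => c k * ρ ^ (j * k)) :
          PowerSeries ℂ)).order
      = ((∑ l ∈ Finset.Icc 1 M, (e (l - 1) - e l) * β l : ℕ) : ℕ∞) := by
  classical
  have hm0 : 0 < m := hm
  -- the chain of divisibilities e_M ∣ ⋯ ∣ e_1 ∣ e_0
  have hstep : ∀ l, 1 ≤ l → l ≤ M → e l ∣ e (l - 1) := by
    intro l h1 h2
    rw [he l h1 h2]
    exact Nat.gcd_dvd_left _ _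
  have hchain : ∀ b, b ≤ M → ∀ a, a ≤ b → e b ∣ e a := by
    intro b
    induction b with
    | zero =>
      intro _ a ha
      have : a = 0 := Nat.le_zero.mp ha
      subst this; exact dvd_rfl
    | succ n ih =>
      intro hb a ha
      rcases Nat.eq_or_lt_of_le ha with h | h
      · rw [← h]
      · have h1 : e (n + 1) ∣ e n := by
          have := hstep (n + 1) (Nat.le_add_left 1 n) hb
          simpa using this
        exact h1.trans (ih (by omega) a (by omega))
  have hem : ∀ l, l ≤ M → e l ∣ m := by
    intro l hl
    have := hchain l hl 0 (Nat.zero_le _)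
    rwa [he0] at this
  have hepos : ∀ l, l ≤ M → 0 < e l := by
    intro l hl
    rcases Nat.eq_zero_or_pos (e l) with h | h
    · exfalso; have := hem l hl; rw [h] at this; omega
    · exact h
  -- notation
  set q : ℕ → ℕ := fun j => m / Nat.gcd j m with hqdef
  set L : ℕ → ℕ := fun j => sInf {l | ¬ q j ∣ e l} with hLdef
  -- basic facts about q j for j ∈ [1, m-1]
  have hgpos : ∀ j : ℕ, 0 < Nat.gcd j m := fun j => Nat.gcd_pos_of_pos_right j hm0
  have hq1 : ∀ j ∈ Finset.Icc 1 (m - 1), 1 < q j := by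
    intro j hj
    rw [Finset.mem_Icc] at hj
    have hglt : Nat.gcd j m < m := by
      rcases Nat.lt_or_ge (Nat.gcd j m) m with h | h
      · exact h
      · exfalso
        have h1 : Nat.gcd j m ≤ j := Nat.le_of_dvd (by omega) (Nat.gcd_dvd_left j m)
        omega
    have hqg : q j * Nat.gcd j m = m := Nat.div_mul_cancel (Nat.gcd_dvd_right j m)
    by_contra h
    push_neg at h
    interval_cases h' : (q j)
    · omega
    · omega
  have hqm : ∀ j : ℕ, q j ∣ m := fun j => Nat.div_dvd_of_dvd (Nat.gcd_dvd_right j m)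
  -- facts about L j
  have hLne : ∀ j ∈ Finset.Icc 1 (m - 1), ({l | ¬ q j ∣ e l}).Nonempty := by
    intro j hj
    refine ⟨M, ?_⟩
    simp only [Set.mem_setOf_eq, heM, Nat.dvd_one]
    have := hq1 j hj; omega
  have hLmem : ∀ j ∈ Finset.Icc 1 (m - 1), ¬ q j ∣ e (L j) :=
    fun j hj => Nat.sInf_mem (hLne j hj)
  have hLle : ∀ j ∈ Finset.Icc 1 (m - 1), L j ≤ M := by
    intro j hj
    apply Nat.sInf_le
    simp only [Set.mem_setOf_eq, heM, Nat.dvd_one]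
    have := hq1 j hj; omega
  have hLlow : ∀ j ∈ Finset.Icc 1 (m - 1), ∀ l < L j, q j ∣ e l := by
    intro j hj l hl
    by_contra h
    have hx : L j ≤ l := Nat.sInf_le (show l ∈ {l | ¬ q j ∣ e l} from h)
    omega
  have hL1 : ∀ j ∈ Finset.Icc 1 (m - 1), 1 ≤ L j := by
    intro j hj
    by_contra h
    push_neg at h
    have h0 : L j = 0 := by omega
    have := hLmem j hj
    rw [h0, he0] at this
    exact this (hqm j)
  -- divisibility translation: m ∣ j * k ↔ q j ∣ k
  have hdiviff : ∀ j : ℕ, ∀ k : ℕ, (m ∣ j * k ↔ q j ∣ k) := by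
    intro j k
    have hg := hgpos j
    have cop : Nat.Coprime (j / Nat.gcd j m) (m / Nat.gcd j m) :=
      Nat.coprime_div_gcd_div_gcd hg
    have hj' : Nat.gcd j m * (j / Nat.gcd j m) = j := Nat.mul_div_cancel' (Nat.gcd_dvd_left j m)
    have hm' : Nat.gcd j m * (m / Nat.gcd j m) = m := Nat.mul_div_cancel' (Nat.gcd_dvd_right j m)
    constructor
    · intro h
      have h2 : Nat.gcd j m * (m / Nat.gcd j m) ∣ Nat.gcd j m * (j / Nat.gcd j m * k) := by
        rw [hm', ← mul_assoc, hj']; exact h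
      have h3 : m / Nat.gcd j m ∣ j / Nat.gcd j m * k :=
        (mul_dvd_mul_iff_left (show Nat.gcd j m ≠ 0 by omega)).mp h2
      exact (Nat.Coprime.dvd_mul_left cop.symm).mp h3
    · intro h
      have h3 : m / Nat.gcd j m ∣ j / Nat.gcd j m * k := Dvd.dvd.mul_left h _
      have h2 : Nat.gcd j m * (m / Nat.gcd j m) ∣ Nat.gcd j m * (j / Nat.gcd j m * k) :=
        mul_dvd_mul_left _ h3
      rwa [hm', ← mul_assoc, hj'] at h2
  -- coefficients of the factors
  have hcoeff : ∀ j k : ℕ,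
      (PowerSeries.coeff (R := ℂ) k) (PowerSeries.mk c - PowerSeries.mk (fun k => c k * ρ ^ (j * k)))
        = c k * (1 - ρ ^ (j * k)) := by
    intro j k
    simp [mul_sub]
  -- order of each factor
  have horder : ∀ j ∈ Finset.Icc 1 (m - 1),
      (PowerSeries.mk c - PowerSeries.mk (fun k => c k * ρ ^ (j * k)) :
        PowerSeries ℂ).order = (β (L j) : ℕ∞) := by
    intro j hj
    have h1L := hL1 j hj
    have hLM := hLle j hj
    have hβL := hβ (L j) h1L hLM
    rw [PowerSeries.order_eq_nat]
    constructor
    · rw [hcoeff]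
      apply mul_ne_zero hβL.1.1
      rw [sub_ne_zero]
      intro hone
      have hdvd : m ∣ j * β (L j) := (hρ.pow_eq_one_iff_dvd _).mp hone.symm
      have hq : q j ∣ β (L j) := (hdiviff j _).mp hdvd
      have hqe : q j ∣ e (L j - 1) := hLlow j hj (L j - 1) (by omega)
      have : q j ∣ e (L j) := by
        rw [he (L j) h1L hLM]
        exact Nat.dvd_gcd hqe hq
      exact hLmem j hj this
    · intro i hi
      rw [hcoeff]
      by_cases hci : c i = 0
      · rw [hci, zero_mul]
      · have hdvd : e (L j - 1) ∣ i := by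
          by_contra h
          have := hβL.2 (show i ∈ {k | c k ≠ 0 ∧ ¬ e (L j - 1) ∣ k} from ⟨hci, h⟩)
          omega
        have hqi : q j ∣ i := (hLlow j hj (L j - 1) (by omega)).trans hdvd
        have : ρ ^ (j * i) = 1 := (hρ.pow_eq_one_iff_dvd _).mpr ((hdiviff j i).mpr hqi)
        rw [this, sub_self, mul_zero]
  -- order of the product is the sum of the orders
  have hprod : ∀ s : Finset ℕ,
      (∏ j ∈ s,
        (PowerSeries.mk c - PowerSeries.mk (fun k => c k * ρ ^ (j * k)) :
          PowerSeries ℂ)).order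
      = ∑ j ∈ s,
        (PowerSeries.mk c - PowerSeries.mk (fun k => c k * ρ ^ (j * k)) :
          PowerSeries ℂ).order := by
    intro s
    induction s using Finset.cons_induction with
    | empty => simp
    | cons a s ha ih =>
      rw [Finset.prod_cons, Finset.sum_cons, PowerSeries.order_mul, ih]
  rw [hprod, Finset.sum_congr rfl horder]
  -- reduce to a sum of naturals
  rw [show (∑ j ∈ Finset.Icc 1 (m - 1), (β (L j) : ℕ∞))
      = ((∑ j ∈ Finset.Icc 1 (m - 1), β (L j) : ℕ) : ℕ∞) by push_cast; rfl]
  congr 1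
  -- translation: q j ∣ e l ↔ m / e l ∣ j
  have htrans : ∀ l, l ≤ M → ∀ j ∈ Finset.Icc 1 (m - 1), (q j ∣ e l ↔ m / e l ∣ j) := by
    intro l hl j hj
    have hel : e l ∣ m := hem l hl
    have helpos : e l ≠ 0 := by have := hepos l hl; omega
    have hgne : Nat.gcd j m ≠ 0 := by have := hgpos j; omega
    have step1 : q j ∣ e l ↔ m ∣ Nat.gcd j m * e l :=
      Nat.div_dvd_iff_dvd_mul (Nat.gcd_dvd_right j m) (Nat.pos_of_ne_zero hgne)
    have step2 : m / e l ∣ Nat.gcd j m ↔ m ∣ e l * Nat.gcd j m :=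
      Nat.div_dvd_iff_dvd_mul hel (Nat.pos_of_ne_zero helpos)
    rw [step1, mul_comm, ← step2]
    constructor
    · intro h
      exact h.trans (Nat.gcd_dvd_left j m)
    · intro h
      exact Nat.dvd_gcd h (Nat.div_dvd_of_dvd hel)
  -- characterization of the fibers of L
  have hchar : ∀ l, 1 ≤ l → l ≤ M → ∀ j ∈ Finset.Icc 1 (m - 1),
      (L j = l ↔ (m / e (l - 1) ∣ j ∧ ¬ m / e l ∣ j)) := by
    intro l h1 h2 j hj
    constructor
    · rintro rfl
      refine ⟨?_, ?_⟩
      · exact (htrans (L j - 1) (by omega) j hj).mp (hLlow j hj (L j - 1) (by have := hL1 j hj; omega))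
      · intro h
        exact hLmem j hj ((htrans (L j) (hLle j hj) j hj).mpr h)
    · rintro ⟨ha, hb⟩
      have hqel : ¬ q j ∣ e l := fun h => hb ((htrans l h2 j hj).mp h)
      have hqel1 : q j ∣ e (l - 1) := (htrans (l - 1) (by omega) j hj).mpr ha
      have hle : L j ≤ l := Nat.sInf_le hqel
      rcases Nat.eq_or_lt_of_le hle with h | h
      · exact h
      · exfalso
        have hd : e (l - 1) ∣ e (L j) := hchain (l - 1) (by omega) (L j) (by omega)
        exact hLmem j hj (hqel1.trans hd)
  -- counting multiples
  have hcardd : ∀ d : ℕ, 0 < d → d ∣ m →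
      (Finset.filter (fun j => d ∣ j) (Finset.Icc 1 (m - 1))).card = m / d - 1 := by
    intro d hd hdm
    have himg : Finset.filter (fun j => d ∣ j) (Finset.Icc 1 (m - 1))
        = (Finset.Icc 1 (m / d - 1)).image (fun i => d * i) := by
      ext j
      simp only [Finset.mem_filter, Finset.mem_image, Finset.mem_Icc]
      constructor
      · rintro ⟨⟨hj1, hj2⟩, i, rfl⟩
        refine ⟨i, ⟨?_, ?_⟩, rfl⟩
        · by_contra h; push_neg at h
          interval_cases i
          omega
        · have hlt : d * i < m := by omega
          have : i < m / d := by
            rw [Nat.lt_div_iff_mul_lt' hdm]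
            omega
          omega
      · rintro ⟨i, ⟨hi1, hi2⟩, rfl⟩
        have hdm2 : d * (m / d) = m := Nat.mul_div_cancel' hdm
        have hub : d * i < m := by
          have : i < m / d := by omega
          calc d * i < d * (m / d) := by
                exact Nat.mul_lt_mul_of_pos_left this hd
            _ = m := hdm2
        refine ⟨⟨by nlinarith, by omega⟩, i, rfl⟩
    rw [himg, Finset.card_image_of_injective _ (fun a b h => by
      exact Nat.eq_of_mul_eq_mul_left hd h), Nat.card_Icc]
    omega
  -- cardinality of each fiber
  have hfiber : ∀ l ∈ Finset.Icc 1 M,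
      (Finset.filter (fun j => L j = l) (Finset.Icc 1 (m - 1))).card = e (l - 1) - e l := by
    intro l hl
    rw [Finset.mem_Icc] at hl
    obtain ⟨h1, h2⟩ := hl
    have hfc : Finset.filter (fun j => L j = l) (Finset.Icc 1 (m - 1))
        = Finset.filter (fun j => m / e (l - 1) ∣ j ∧ ¬ m / e l ∣ j) (Finset.Icc 1 (m - 1)) := by
      apply Finset.filter_congr
      intro j hj
      exact hchar l h1 h2 j hj
    rw [hfc]
    have hsd : Finset.filter (fun j => m / e (l - 1) ∣ j ∧ ¬ m / e l ∣ j) (Finset.Icc 1 (m - 1))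
        = Finset.filter (fun j => m / e (l - 1) ∣ j) (Finset.Icc 1 (m - 1))
          \ Finset.filter (fun j => m / e l ∣ j) (Finset.Icc 1 (m - 1)) := by
      ext j
      simp only [Finset.mem_filter, Finset.mem_sdiff]
      tauto
    -- m / e (l-1) divides m / e l
    have hstepl : e l ∣ e (l - 1) := hstep l h1 h2
    have hel1m : e (l - 1) ∣ m := hem (l - 1) (by omega)
    have helm : e l ∣ m := hem l h2
    have helpos : 0 < e l := hepos l h2
    have hel1pos : 0 < e (l - 1) := hepos (l - 1) (by omega)
    have hddvd : m / e (l - 1) ∣ m / e l := by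
      obtain ⟨k, hk⟩ := hstepl
      have hkdvd : k ∣ m / e l := by
        rw [Nat.dvd_div_iff_mul_dvd helm, ← hk]
        exact hel1m
      have : m / e (l - 1) = m / e l / k := by
        rw [hk, Nat.div_div_eq_div_mul]
      rw [this]
      exact Nat.div_dvd_of_dvd hkdvd
    have hsub : Finset.filter (fun j => m / e l ∣ j) (Finset.Icc 1 (m - 1))
        ⊆ Finset.filter (fun j => m / e (l - 1) ∣ j) (Finset.Icc 1 (m - 1)) := by
      intro j
      simp only [Finset.mem_filter]
      exact fun ⟨hj, hd⟩ => ⟨hj, hddvd.trans hd⟩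
    rw [hsd, Finset.card_sdiff_of_subset hsub]
    have c1 : (Finset.filter (fun j => m / e (l - 1) ∣ j) (Finset.Icc 1 (m - 1))).card
        = e (l - 1) - 1 := by
      rw [hcardd (m / e (l - 1)) (Nat.div_pos (Nat.le_of_dvd hm0 hel1m) hel1pos)
        (Nat.div_dvd_of_dvd hel1m), Nat.div_div_self hel1m (by omega)]
    have c2 : (Finset.filter (fun j => m / e l ∣ j) (Finset.Icc 1 (m - 1))).card
        = e l - 1 := by
      rw [hcardd (m / e l) (Nat.div_pos (Nat.le_of_dvd hm0 helm) helpos)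
        (Nat.div_dvd_of_dvd helm), Nat.div_div_self helm (by omega)]
    rw [c1, c2]
    have : e l ≤ e (l - 1) := Nat.le_of_dvd hel1pos hstepl
    omega
  -- put everything together
  have hmaps : ∀ j ∈ Finset.Icc 1 (m - 1), L j ∈ Finset.Icc 1 M := by
    intro j hj
    rw [Finset.mem_Icc]
    exact ⟨hL1 j hj, hLle j hj⟩
  rw [← Finset.sum_fiberwise_of_maps_to hmaps (fun j => β (L j))]
  apply Finset.sum_congr rfl
  intro l hl
  have hconst : ∀ j ∈ Finset.filter (fun j => L j = l) (Finset.Icc 1 (m - 1)),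
      β (L j) = β l := by
    intro j hj
    rw [Finset.mem_filter] at hj
    rw [hj.2]
  rw [Finset.sum_congr rfl hconst, Finset.sum_const, hfiber l hl, smul_eq_mul]
end
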